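/- For every complex number z with Re z ≥ 0, the Laplace transform of the Galton–Watson process with immigration satisfies the functional equation φ_*(z) = h(φ(z)) · φ_*(z/a). -/

import Mathlib

open Filter Topology MeasureTheory ProbabilityTheory

private lemma measurable_nat_elim {Ω : Type} {m : MeasurableSpace Ω}
    {N : Ω → ℕ} (hN : Measurable[m] N) {f : ℕ → Ω → ℕ}
    (hf : ∀ k, Measurable[m] (f k)) :
    Measurable[m] (fun ω => f (N ω) ω) := by
  apply measurable_to_countable'
  intro k
  have heq : (fun ω => f (N ω) ω) ⁻¹' {k} = ⋃ m', (N ⁻¹' {m'}) ∩ (f m' ⁻¹' {k}) := by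
    ext ω
    simp only [Set.mem_preimage, Set.mem_singleton_iff, Set.mem_iUnion, Set.mem_inter_iff]
    constructor
    · intro hk; exact ⟨N ω, rfl, hk⟩
    · rintro ⟨m', rfl, hk⟩; exact hk
  rw [heq]
  exact MeasurableSet.iUnion fun m' =>
    (hN (measurableSet_singleton _)).inter (hf m' (measurableSet_singleton _))

private lemma integrable_of_bdd {Ω : Type} [MeasurableSpace Ω] {μ : Measure Ω}
    [IsProbabilityMeasure μ] {f : Ω → ℂ} (hf : AEStronglyMeasurable f μ)
    (hb : ∀ ω, ‖f ω‖ ≤ 1) : Integrable f μ :=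
  Integrable.mono' (integrable_const 1) hf (Filter.Eventually.of_forall hb)

private lemma norm_integral_le_one {Ω : Type} [MeasurableSpace Ω] {μ : Measure Ω}
    [IsProbabilityMeasure μ] {f : Ω → ℂ} (hb : ∀ᵐ ω ∂μ, ‖f ω‖ ≤ 1) :
    ‖∫ ω, f ω ∂μ‖ ≤ 1 := by
  calc ‖∫ ω, f ω ∂μ‖ ≤ 1 * (μ Set.univ).toReal := norm_integral_le_of_norm_le_const hb
  _ = 1 := by simp

private lemma indep_integral_mul {Ω : Type} [MeasurableSpace Ω] {μ : Measure Ω}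
    [IsProbabilityMeasure μ] {f g : Ω → ℂ} (hfg : IndepFun f g μ)
    (hf : Measurable f) (hg : Measurable g)
    (hbf : ∀ ω, ‖f ω‖ ≤ 1) (hbg : ∀ ω, ‖g ω‖ ≤ 1) :
    ∫ ω, f ω * g ω ∂μ = (∫ ω, f ω ∂μ) * ∫ ω, g ω ∂μ := by
  have hIf : Integrable f μ := integrable_of_bdd hf.aestronglyMeasurable hbf
  have hIg : Integrable g μ := integrable_of_bdd hg.aestronglyMeasurable hbg
  have hIfg : Integrable (fun ω => f ω * g ω) μ := by
    refine integrable_of_bdd (hf.mul hg).aestronglyMeasurable fun ω => ?_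
    rw [norm_mul]
    exact mul_le_one₀ (hbf ω) (norm_nonneg _) (hbg ω)
  have mre : Measurable fun x : ℂ => x.re := Complex.measurable_re
  have mim : Measurable fun x : ℂ => x.im := Complex.measurable_im
  have hrr := (hfg.comp mre mre).integral_fun_mul_eq_mul_integral hIf.re.aestronglyMeasurable hIg.re.aestronglyMeasurable
  have hri := (hfg.comp mre mim).integral_fun_mul_eq_mul_integral hIf.re.aestronglyMeasurable hIg.im.aestronglyMeasurable
  have hir := (hfg.comp mim mre).integral_fun_mul_eq_mul_integral hIf.im.aestronglyMeasurable hIg.re.aestronglyMeasurable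
  have hii := (hfg.comp mim mim).integral_fun_mul_eq_mul_integral hIf.im.aestronglyMeasurable hIg.im.aestronglyMeasurable
  have irr : Integrable (fun ω => (f ω).re * (g ω).re) μ :=
    (hfg.comp mre mre).integrable_mul hIf.re hIg.re
  have iri : Integrable (fun ω => (f ω).re * (g ω).im) μ :=
    (hfg.comp mre mim).integrable_mul hIf.re hIg.im
  have iir : Integrable (fun ω => (f ω).im * (g ω).re) μ :=
    (hfg.comp mim mre).integrable_mul hIf.im hIg.re
  have iii : Integrable (fun ω => (f ω).im * (g ω).im) μ :=
    (hfg.comp mim mim).integrable_mul hIf.im hIg.im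
  have Ere : ∀ (φ : Ω → ℂ), Integrable φ μ → (∫ ω, φ ω ∂μ).re = ∫ ω, (φ ω).re ∂μ := by
    intro φ hI
    have := integral_re (μ := μ) (f := φ) hI
    simpa using this.symm
  have Eim : ∀ (φ : Ω → ℂ), Integrable φ μ → (∫ ω, φ ω ∂μ).im = ∫ ω, (φ ω).im ∂μ := by
    intro φ hI
    have := integral_im (μ := μ) (f := φ) hI
    simpa using this.symm
  apply Complex.ext
  · rw [Ere _ hIfg, Complex.mul_re, Ere _ hIf, Ere _ hIg, Eim _ hIf, Eim _ hIg]
    have : (fun ω => (f ω * g ω).re)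
        = fun ω => (f ω).re * (g ω).re - (f ω).im * (g ω).im := by
      funext ω; simp [Complex.mul_re]
    rw [this, integral_sub irr iii]
    rw [show (∫ ω, (f ω).re * (g ω).re ∂μ) = _ from hrr,
        show (∫ ω, (f ω).im * (g ω).im ∂μ) = _ from hii]
    rfl
  · rw [Eim _ hIfg, Complex.mul_im, Ere _ hIf, Ere _ hIg, Eim _ hIf, Eim _ hIg]
    have : (fun ω => (f ω * g ω).im)
        = fun ω => (f ω).re * (g ω).im + (f ω).im * (g ω).re := by
      funext ω; simp [Complex.mul_im]
    rw [this, integral_add iri iir]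
    rw [show (∫ ω, (f ω).re * (g ω).im ∂μ) = _ from hri,
        show (∫ ω, (f ω).im * (g ω).re ∂μ) = _ from hir]
    rfl

private lemma integral_eq_tsum_fiber {Ω : Type} [MeasurableSpace Ω] {μ : Measure Ω}
    [IsProbabilityMeasure μ] {N : Ω → ℕ} (hN : Measurable N) {f : Ω → ℂ}
    (hfi : Integrable f μ) :
    ∫ ω, f ω ∂μ = ∑' m, ∫ ω in N ⁻¹' {m}, f ω ∂μ := by
  have hs : ∀ k : ℕ, MeasurableSet (N ⁻¹' {k}) := fun k => hN (measurableSet_singleton k)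
  have hd : Pairwise (Function.onFun Disjoint fun k : ℕ => N ⁻¹' {k}) := by
    intro i j hij
    exact Set.disjoint_left.2 fun ω hi hj => hij (by
      simp only [Set.mem_preimage, Set.mem_singleton_iff] at hi hj
      rw [← hi, ← hj])
  have hcover : (⋃ k : ℕ, N ⁻¹' {k}) = Set.univ := by
    ext ω; simp
  rw [← setIntegral_univ (μ := μ) (f := f), ← hcover,
    integral_iUnion hs hd (hcover ▸ hfi.integrableOn)]

private lemma integral_pow_eq_tsum {Ω : Type} [MeasurableSpace Ω] {μ : Measure Ω}
    [IsProbabilityMeasure μ] {V : Ω → ℕ} (hV : Measurable V) {r : ℕ → ℝ}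
    (hr : ∀ k, μ {ω | V ω = k} = ENNReal.ofReal (r k)) (hrnn : ∀ k, 0 ≤ r k)
    {g : ℕ → ℂ} (hg : ∀ k, ‖g k‖ ≤ 1) :
    ∫ ω, g (V ω) ∂μ = ∑' k, (r k : ℂ) * g k := by
  have hmg : Measurable fun ω => g (V ω) := measurable_from_top.comp hV
  have hfi : Integrable (fun ω => g (V ω)) μ :=
    integrable_of_bdd hmg.aestronglyMeasurable (fun ω => hg _)
  rw [integral_eq_tsum_fiber hV hfi]
  congr 1
  funext k
  have hcongr : ∫ ω in V ⁻¹' {k}, g (V ω) ∂μ = ∫ _ω in V ⁻¹' {k}, g k ∂μ := by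
    apply setIntegral_congr_fun (hV (measurableSet_singleton k))
    intro ω hω
    simp only [Set.mem_preimage, Set.mem_singleton_iff] at hω
    show g (V ω) = g k
    rw [hω]
  rw [hcongr, setIntegral_const]
  have : V ⁻¹' {k} = {ω | V ω = k} := by ext ω; simp
  rw [this, measureReal_def, hr k, ENNReal.toReal_ofReal (hrnn k)]
  rw [Complex.real_smul]
/-- For every complex `z` with `Re z ≥ 0`, the Laplace transform of the
Galton–Watson process with immigration satisfies `φ_*(z) = h(φ(z)) φ_*(z/a)`. -/
theorem stmt_12
    (p : ℕ → ℝ) (hp0 : p 0 = 0) (hp1 : 0 < p 1) (hp1' : p 1 < 1)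
    (hpnn : ∀ k, 0 ≤ p k) (hpsum : ∑' k, p k = 1)
    (hmean : Summable fun k : ℕ => (k : ℝ) * p k)
    (a : ℝ) (ha : a = ∑' k : ℕ, (k : ℝ) * p k) (ha1 : 1 < a)
    (hxlogx : Summable fun k : ℕ => p k * k * Real.log k)
    (q : ℕ → ℝ) (hq0 : q 0 = 0) (hqnn : ∀ k, 0 ≤ q k) (hqsum : ∑' k, q k = 1)
    (hqlog : Summable fun k : ℕ => q k * Real.log k)
    (ν : ℕ) (hν : 0 < q ν) (hνmin : ∀ i, 0 < q i → ν ≤ i)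
    (h : ℂ → ℂ) (hh : ∀ z : ℂ, ‖z‖ ≤ 1 → h z = ∑' n, (q n : ℂ) * z ^ n)
    {Ω : Type} [MeasurableSpace Ω] (μ : Measure Ω) [IsProbabilityMeasure μ]
    (X : ℕ → ℕ → Ω → ℕ) (hXmeas : ∀ n i, Measurable (X n i))
    (hXdist : ∀ n i k, μ {ω | X n i ω = k} = ENNReal.ofReal (p k))
    (Y : ℕ → Ω → ℕ) (hYmeas : ∀ j, Measurable (Y j))
    (hYdist : ∀ j k, μ {ω | Y j ω = k} = ENNReal.ofReal (q k))
    (hindep : iIndepFun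
      (fun i : (ℕ × ℕ) ⊕ ℕ => Sum.elim (fun ni : ℕ × ℕ => X ni.1 ni.2) Y i) μ)
    (Z : ℕ → Ω → ℕ) (hZ0 : ∀ ω, Z 0 ω = 1)
    (hZ : ∀ n ω, Z (n + 1) ω = ∑ i ∈ Finset.range (Z n ω), X n i ω)
    (W : Ω → ℝ) (hWmeas : Measurable W)
    (hW : ∀ᵐ ω ∂μ, Tendsto (fun n => (Z n ω : ℝ) / a ^ n) atTop (𝓝 (W ω)))
    (hWpos : ∀ᵐ ω ∂μ, 0 < W ω)
    (ZI : ℕ → Ω → ℕ) (hZI0 : ∀ ω, ZI 0 ω = Y 0 ω)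
    (hZI : ∀ n ω, ZI (n + 1) ω =
      (∑ i ∈ Finset.range (ZI n ω), X n i ω) + Y (n + 1) ω)
    (WI : Ω → ℝ) (hWImeas : Measurable WI)
    (hWI : ∀ᵐ ω ∂μ, Tendsto (fun n => (ZI n ω : ℝ) / a ^ n) atTop (𝓝 (WI ω)))
    (hWIpos : ∀ᵐ ω ∂μ, 0 < WI ω)
    (φ : ℂ → ℂ) (hφ : ∀ z : ℂ, 0 ≤ z.re → φ z = ∫ ω, Complex.exp (-z * (W ω : ℂ)) ∂μ)
    (φs : ℂ → ℂ) (hφs : ∀ z : ℂ, 0 ≤ z.re → φs z = ∫ ω, Complex.exp (-z * (WI ω : ℂ)) ∂μ) :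
    ∀ z : ℂ, 0 ≤ z.re → φs z = h (φ z) * φs (z / (a : ℂ)) := by
  intro z hz
  classical
  have ha0 : (0:ℝ) < a := lt_trans one_pos ha1
  -- basic norm facts
  have hupow : ∀ (u : ℂ), ‖u‖ ≤ 1 → ∀ k : ℕ, ‖u ^ k‖ ≤ 1 := by
    intro u hu k
    rw [norm_pow]
    exact pow_le_one₀ (norm_nonneg u) hu
  -- the indexed family of variables and generated σ-algebras
  set F : (ℕ × ℕ) ⊕ ℕ → Ω → ℕ :=
    fun i => Sum.elim (fun ni : ℕ × ℕ => X ni.1 ni.2) Y i with hF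
  have hFmeas : ∀ j, Measurable (F j) := by
    rintro (⟨n, i⟩ | j)
    · exact hXmeas n i
    · exact hYmeas j
  set 𝓕 : (ℕ × ℕ) ⊕ ℕ → MeasurableSpace Ω :=
    fun j => MeasurableSpace.comap (F j) inferInstance with h𝓕
  have hind : iIndep 𝓕 μ := (iIndepFun_iff_iIndep _ _ _).1 hindep
  have h𝓕le : ∀ j, 𝓕 j ≤ ‹MeasurableSpace Ω› := fun j => (hFmeas j).comap_le
  have hsuple : ∀ (S : Set ((ℕ × ℕ) ⊕ ℕ)), (⨆ j ∈ S, 𝓕 j) ≤ ‹MeasurableSpace Ω› :=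
    fun S => iSup₂_le fun j _ => h𝓕le j
  have hIndepST : ∀ (S T : Set ((ℕ × ℕ) ⊕ ℕ)), Disjoint S T →
      Indep (⨆ j ∈ S, 𝓕 j) (⨆ j ∈ T, 𝓕 j) μ :=
    fun S T hST => indep_iSup_of_disjoint h𝓕le hind hST
  have hIndepFunST : ∀ {S T : Set ((ℕ × ℕ) ⊕ ℕ)}, Disjoint S T →
      ∀ {f g : Ω → ℂ}, Measurable[⨆ j ∈ S, 𝓕 j] f → Measurable[⨆ j ∈ T, 𝓕 j] g →
      IndepFun f g μ := by
    intro S T hST f g hfm hgm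
    rw [IndepFun_iff_Indep]
    exact indep_of_indep_of_le_right
      (indep_of_indep_of_le_left (hIndepST S T hST) hfm.comap_le) hgm.comap_le
  have hmeasF : ∀ (S : Set ((ℕ × ℕ) ⊕ ℕ)) (j), j ∈ S →
      Measurable[⨆ j ∈ S, 𝓕 j] (F j) := by
    intro S j hj
    have h1 : Measurable[𝓕 j] (F j) := measurable_iff_comap_le.2 le_rfl
    exact h1.mono (le_biSup 𝓕 hj) le_rfl
  have hmeaspow : ∀ {m' : MeasurableSpace Ω} (u : ℂ) {V : Ω → ℕ},
      Measurable[m'] V → Measurable[m'] fun ω => u ^ V ω := by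
    intro m' u V hV
    exact Measurable.comp (measurable_from_top (f := fun k : ℕ => u ^ k)) hV
  -- past and future index sets
  set Spast : ℕ → Set ((ℕ × ℕ) ⊕ ℕ) :=
    fun n => {j | Sum.elim (fun ni : ℕ × ℕ => ni.1 < n) (fun j' => j' ≤ n) j} with hSpast
  set P : ℕ → MeasurableSpace Ω := fun n => ⨆ j ∈ Spast n, 𝓕 j with hP
  have hPle : ∀ n, P n ≤ ‹MeasurableSpace Ω› := fun n => hsuple _
  have hSmono : ∀ n, Spast n ⊆ Spast (n + 1) := by
    rintro n (⟨m, i⟩ | j) hj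
    · exact Nat.lt_succ_of_lt hj
    · exact Nat.le_succ_of_le hj
  have hPmono : ∀ n, P n ≤ P (n + 1) := fun n => biSup_mono (hSmono n)
  -- measurability of Z n and ZI n with respect to the past
  have hZP : ∀ n, Measurable[P n] (Z n) ∧ Measurable[P n] (ZI n) := by
    intro n
    induction n with
    | zero =>
      constructor
      · have hc : Z 0 = fun _ => 1 := funext hZ0
        rw [hc]; exact measurable_const
      · have hc : ZI 0 = F (Sum.inr 0) := funext fun ω => hZI0 ω
        rw [hc]
        exact hmeasF (Spast 0) (Sum.inr 0) (by simp [hSpast])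
    | succ n ih =>
      have hXm : ∀ i, Measurable[P (n + 1)] (X n i) := fun i =>
        hmeasF (Spast (n + 1)) (Sum.inl (n, i)) (by simp [hSpast])
      have hsum : ∀ (N : Ω → ℕ), Measurable[P (n + 1)] N →
          Measurable[P (n + 1)] (fun ω => ∑ i ∈ Finset.range (N ω), X n i ω) := by
        intro N hN
        exact measurable_nat_elim hN
          (fun m => Finset.measurable_sum _ (fun i _ => hXm i))
      constructor
      · have hc : Z (n + 1) = fun ω => ∑ i ∈ Finset.range (Z n ω), X n i ω :=
          funext (hZ n)
        rw [hc]
        exact hsum _ (ih.1.mono (hPmono n) le_rfl)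
      · have hc : ZI (n + 1) =
            fun ω => (∑ i ∈ Finset.range (ZI n ω), X n i ω) + Y (n + 1) ω :=
          funext (hZI n)
        rw [hc]
        exact (hsum _ (ih.2.mono (hPmono n) le_rfl)).add
          (hmeasF (Spast (n + 1)) (Sum.inr (n + 1)) (by simp [hSpast]))
  have hZm : ∀ n, Measurable (Z n) := fun n => ((hZP n).1).mono (hPle n) le_rfl
  have hZIm : ∀ n, Measurable (ZI n) := fun n => ((hZP n).2).mono (hPle n) le_rfl
  -- the offspring generating function
  set fc : ℂ → ℂ := fun u => ∑' k, (p k : ℂ) * u ^ k with hfcdef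
  have hXint : ∀ n i (u : ℂ), ‖u‖ ≤ 1 → ∫ ω, u ^ X n i ω ∂μ = fc u := fun n i u hu =>
    integral_pow_eq_tsum (hXmeas n i) (hXdist n i) hpnn (hupow u hu)
  have hYint : ∀ j (u : ℂ), ‖u‖ ≤ 1 → ∫ ω, u ^ Y j ω ∂μ = h u := by
    intro j u hu
    rw [integral_pow_eq_tsum (hYmeas j) (hYdist j) hqnn (hupow u hu), ← hh u hu]
  have hnormfc : ∀ (u : ℂ), ‖u‖ ≤ 1 → ‖fc u‖ ≤ 1 := by
    intro u hu
    rw [← hXint 0 0 u hu]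
    exact norm_integral_le_one (Filter.Eventually.of_forall fun ω => hupow u hu _)
  -- ∫ of a product of u^(X n i) over i < m
  have hprodmeas : ∀ (n m : ℕ) (u : ℂ),
      Measurable[⨆ j ∈ {j : (ℕ × ℕ) ⊕ ℕ | ∃ i, j = Sum.inl (n, i)}, 𝓕 j]
        (fun ω => ∏ i ∈ Finset.range m, u ^ X n i ω) := by
    intro n m u
    apply Finset.measurable_prod
    intro i _
    exact hmeaspow u (hmeasF _ (Sum.inl (n, i)) ⟨i, rfl⟩)
  have hprodbdd : ∀ (n m : ℕ) (u : ℂ), ‖u‖ ≤ 1 → ∀ ω,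
      ‖∏ i ∈ Finset.range m, u ^ X n i ω‖ ≤ 1 := by
    intro n m u hu ω
    rw [norm_prod]
    exact Finset.prod_le_one (fun i _ => norm_nonneg _) (fun i _ => hupow u hu _)
  have hprodint : ∀ (n m : ℕ) (u : ℂ), ‖u‖ ≤ 1 →
      ∫ ω, ∏ i ∈ Finset.range m, u ^ X n i ω ∂μ = fc u ^ m := by
    intro n m u hu
    induction m with
    | zero => simp
    | succ m ihm =>
      have hsplit : (fun ω => ∏ i ∈ Finset.range (m + 1), u ^ X n i ω)
          = fun ω => (∏ i ∈ Finset.range m, u ^ X n i ω) * u ^ X n m ω := by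
        funext ω; exact Finset.prod_range_succ _ m
      have hdisj : Disjoint {j : (ℕ × ℕ) ⊕ ℕ | ∃ i < m, j = Sum.inl (n, i)}
          {j : (ℕ × ℕ) ⊕ ℕ | ∃ i, i = m ∧ j = Sum.inl (n, i)} := by
        rw [Set.disjoint_left]
        rintro j ⟨i, hi, rfl⟩ ⟨i', hi', hj'⟩
        cases hj'
        omega
      have hm1 : Measurable[⨆ j ∈ {j : (ℕ × ℕ) ⊕ ℕ | ∃ i < m, j = Sum.inl (n, i)}, 𝓕 j]
          (fun ω => ∏ i ∈ Finset.range m, u ^ X n i ω) := by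
        apply Finset.measurable_prod
        intro i hi
        exact hmeaspow u (hmeasF _ (Sum.inl (n, i)) ⟨i, Finset.mem_range.1 hi, rfl⟩)
      have hm2 : Measurable[⨆ j ∈ {j : (ℕ × ℕ) ⊕ ℕ | ∃ i, i = m ∧ j = Sum.inl (n, i)}, 𝓕 j]
          (fun ω => u ^ X n m ω) :=
        hmeaspow u (hmeasF _ (Sum.inl (n, m)) ⟨m, rfl, rfl⟩)
      have hIF : IndepFun (fun ω => ∏ i ∈ Finset.range m, u ^ X n i ω)
          (fun ω => u ^ X n m ω) μ := hIndepFunST hdisj hm1 hm2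
      rw [hsplit, indep_integral_mul hIF
        ((hprodmeas n m u).mono (hsuple _) le_rfl)
        ((hmeaspow u (hXmeas n m)))
        (hprodbdd n m u hu) (fun ω => hupow u hu _),
        ihm, hXint n m u hu, pow_succ]
  -- key one-step factorization
  have key : ∀ (n : ℕ) (N G : Ω → ℕ), Measurable[P n] N →
      Measurable[𝓕 (Sum.inr (n + 1))] G → ∀ u : ℂ, ‖u‖ ≤ 1 →
      ∫ ω, u ^ ((∑ i ∈ Finset.range (N ω), X n i ω) + G ω) ∂μ
        = (∫ ω, fc u ^ N ω ∂μ) * ∫ ω, u ^ G ω ∂μ := by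
    intro n N G hN hG u hu
    have hNm : Measurable N := hN.mono (hPle n) le_rfl
    have hGm : Measurable G := hG.mono (h𝓕le _) le_rfl
    -- future index sets
    set TX : Set ((ℕ × ℕ) ⊕ ℕ) := {j | ∃ i, j = Sum.inl (n, i)} with hTX
    set TY : Set ((ℕ × ℕ) ⊕ ℕ) := {Sum.inr (n + 1)} with hTY
    have hGT : Measurable[⨆ j ∈ TY, 𝓕 j] (fun ω => u ^ G ω) := by
      apply hmeaspow u
      exact hG.mono (le_biSup 𝓕 (Set.mem_singleton _)) le_rfl
    -- ∫ (prod * u^G) = fc u ^ m * ∫ u^G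
    have hPG : ∀ m : ℕ,
        ∫ ω, (∏ i ∈ Finset.range m, u ^ X n i ω) * u ^ G ω ∂μ
          = fc u ^ m * ∫ ω, u ^ G ω ∂μ := by
      intro m
      have hdisj : Disjoint TX TY := by
        rw [Set.disjoint_left]
        rintro j ⟨i, rfl⟩ hj'
        simp [hTY] at hj'
      have hIF : IndepFun (fun ω => ∏ i ∈ Finset.range m, u ^ X n i ω)
          (fun ω => u ^ G ω) μ :=
        hIndepFunST hdisj (by
          apply Finset.measurable_prod
          intro i _
          exact hmeaspow u (hmeasF _ (Sum.inl (n, i)) ⟨i, rfl⟩)) hGT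
      rw [indep_integral_mul hIF ((hprodmeas n m u).mono (hsuple _) le_rfl)
        (hmeaspow u hGm) (hprodbdd n m u hu) (fun ω => hupow u hu _),
        hprodint n m u hu]
    -- partition according to the value of N
    have hEm : Measurable fun ω => u ^ ((∑ i ∈ Finset.range (N ω), X n i ω) + G ω) := by
      apply hmeaspow u
      exact (measurable_nat_elim hNm
        (fun m => Finset.measurable_sum _ fun i _ => hXmeas n i)).add hGm
    have hfi : Integrable (fun ω => u ^ ((∑ i ∈ Finset.range (N ω), X n i ω) + G ω)) μ :=
      integrable_of_bdd hEm.aestronglyMeasurable (fun ω => hupow u hu _)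
    rw [integral_eq_tsum_fiber hNm hfi]
    have hfi2 : Integrable (fun ω => fc u ^ N ω) μ :=
      integrable_of_bdd (hmeaspow (fc u) hNm).aestronglyMeasurable
        (fun ω => hupow (fc u) (hnormfc u hu) _)
    rw [integral_eq_tsum_fiber hNm hfi2, ← tsum_mul_right]
    congr 1
    funext m
    have hAmeas : MeasurableSet (N ⁻¹' {m}) := hNm (measurableSet_singleton m)
    -- left side term
    have hls : ∫ ω in N ⁻¹' {m}, u ^ ((∑ i ∈ Finset.range (N ω), X n i ω) + G ω) ∂μ
        = ∫ ω in N ⁻¹' {m}, (∏ i ∈ Finset.range m, u ^ X n i ω) * u ^ G ω ∂μ := by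
      apply setIntegral_congr_fun hAmeas
      intro ω hω
      simp only [Set.mem_preimage, Set.mem_singleton_iff] at hω
      show u ^ ((∑ i ∈ Finset.range (N ω), X n i ω) + G ω)
          = (∏ i ∈ Finset.range m, u ^ X n i ω) * u ^ G ω
      rw [hω, pow_add, Finset.prod_pow_eq_pow_sum]
    have hrs : ∫ ω in N ⁻¹' {m}, fc u ^ N ω ∂μ
        = (μ (N ⁻¹' {m})).toReal • fc u ^ m := by
      have : ∫ ω in N ⁻¹' {m}, fc u ^ N ω ∂μ = ∫ _ω in N ⁻¹' {m}, fc u ^ m ∂μ := by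
        apply setIntegral_congr_fun hAmeas
        intro ω hω
        simp only [Set.mem_preimage, Set.mem_singleton_iff] at hω
        show fc u ^ N ω = fc u ^ m
        rw [hω]
      rw [this, setIntegral_const, measureReal_def]
    rw [hls, hrs]
    -- pull out the indicator of the fiber via independence
    have hprodGm : Measurable fun ω => (∏ i ∈ Finset.range m, u ^ X n i ω) * u ^ G ω :=
      ((hprodmeas n m u).mono (hsuple _) le_rfl).mul (hmeaspow u hGm)
    have hprodGbdd : ∀ ω, ‖(∏ i ∈ Finset.range m, u ^ X n i ω) * u ^ G ω‖ ≤ 1 := by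
      intro ω
      rw [norm_mul]
      exact mul_le_one₀ (hprodbdd n m u hu ω) (norm_nonneg _) (hupow u hu _)
    have hindval : ∫ ω in N ⁻¹' {m}, (∏ i ∈ Finset.range m, u ^ X n i ω) * u ^ G ω ∂μ
        = (μ (N ⁻¹' {m})).toReal
          * ∫ ω, (∏ i ∈ Finset.range m, u ^ X n i ω) * u ^ G ω ∂μ := by
      rw [← integral_indicator hAmeas]
      have hind1 : (fun ω => (N ⁻¹' {m}).indicator
            (fun ω' => (∏ i ∈ Finset.range m, u ^ X n i ω') * u ^ G ω') ω)
          = fun ω => ((N ⁻¹' {m}).indicator (fun _ => (1 : ℂ)) ω)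
              * ((∏ i ∈ Finset.range m, u ^ X n i ω) * u ^ G ω) := by
        funext ω
        by_cases hω : ω ∈ N ⁻¹' {m} <;> simp [Set.indicator_apply, hω]
      rw [hind1]
      have hdisj2 : Disjoint (Spast n) (TX ∪ TY) := by
        rw [Set.disjoint_left]
        rintro j hj hj'
        rcases hj' with hj' | hj'
        · rcases hj' with ⟨i, rfl⟩
          simp only [hSpast, Set.mem_setOf_eq, Sum.elim_inl] at hj
          omega
        · simp only [hTY, Set.mem_singleton_iff] at hj'
          subst hj'
          simp only [hSpast, Set.mem_setOf_eq, Sum.elim_inr] at hj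
          omega
      have hindm : Measurable[P n] ((N ⁻¹' {m}).indicator (fun _ => (1 : ℂ))) := by
        exact Measurable.indicator measurable_const (hN (measurableSet_singleton m))
      have hfutm : Measurable[⨆ j ∈ TX ∪ TY, 𝓕 j]
          (fun ω => (∏ i ∈ Finset.range m, u ^ X n i ω) * u ^ G ω) := by
        refine Measurable.mul ?_ ?_
        · apply Finset.measurable_prod
          intro i _
          refine (hmeaspow u (hmeasF (TX ∪ TY) (Sum.inl (n, i)) (Or.inl ⟨i, rfl⟩)))
        · exact hmeaspow u (hG.mono (le_biSup 𝓕 (Or.inr (Set.mem_singleton _))) le_rfl)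
      have hIF2 : IndepFun ((N ⁻¹' {m}).indicator (fun _ => (1 : ℂ)))
          (fun ω => (∏ i ∈ Finset.range m, u ^ X n i ω) * u ^ G ω) μ :=
        hIndepFunST hdisj2 hindm hfutm
      rw [indep_integral_mul hIF2
        (measurable_const.indicator hAmeas) hprodGm
        (fun ω => by
          by_cases hω : ω ∈ N ⁻¹' {m} <;> simp [Set.indicator_apply, hω])
        hprodGbdd]
      rw [integral_indicator_const (1 : ℂ) hAmeas]
      simp [measureReal_def]
    rw [hindval, hPG m, smul_mul_assoc, Complex.real_smul]
  -- one-step recursions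
  have hGY : ∀ n : ℕ, Measurable[𝓕 (Sum.inr (n + 1))] (Y (n + 1)) := by
    intro n
    have : Y (n + 1) = F (Sum.inr (n + 1)) := rfl
    rw [this]
    exact measurable_iff_comap_le.2 le_rfl
  have R1 : ∀ (n : ℕ) (u : ℂ), ‖u‖ ≤ 1 →
      ∫ ω, u ^ ZI (n + 1) ω ∂μ = (∫ ω, fc u ^ ZI n ω ∂μ) * h u := by
    intro n u hu
    have hc : (fun ω => u ^ ZI (n + 1) ω)
        = fun ω => u ^ ((∑ i ∈ Finset.range (ZI n ω), X n i ω) + Y (n + 1) ω) := by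
      funext ω; rw [hZI n ω]
    rw [hc, key n (ZI n) (Y (n + 1)) (hZP n).2 (hGY n) u hu, hYint (n + 1) u hu]
  have R2 : ∀ (n : ℕ) (u : ℂ), ‖u‖ ≤ 1 →
      ∫ ω, u ^ Z (n + 1) ω ∂μ = ∫ ω, fc u ^ Z n ω ∂μ := by
    intro n u hu
    have hc : (fun ω => u ^ Z (n + 1) ω)
        = fun ω => u ^ ((∑ i ∈ Finset.range (Z n ω), X n i ω) + (fun _ => 0) ω) := by
      funext ω; rw [hZ n ω]; simp
    rw [hc, key n (Z n) (fun _ => 0) (hZP n).1 measurable_const u hu]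
    simp
  -- value at time 0 / 1
  have hZI0int : ∀ (u : ℂ), ‖u‖ ≤ 1 → ∫ ω, u ^ ZI 0 ω ∂μ = h u := by
    intro u hu
    have hc : (fun ω => u ^ ZI 0 ω) = fun ω => u ^ Y 0 ω := by
      funext ω; rw [hZI0 ω]
    rw [hc, hYint 0 u hu]
  have hZ1int : ∀ (u : ℂ), ‖u‖ ≤ 1 → ∫ ω, u ^ Z 1 ω ∂μ = fc u := by
    intro u hu
    rw [R2 0 u hu]
    have hc : (fun ω => fc u ^ Z 0 ω) = fun _ => fc u := by
      funext ω; rw [hZ0 ω, pow_one]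
    rw [hc]
    simp
  -- main functional identity at finite time
  have main : ∀ (n : ℕ) (u : ℂ), ‖u‖ ≤ 1 →
      ∫ ω, u ^ ZI (n + 1) ω ∂μ
        = (∫ ω, u ^ ZI n ω ∂μ) * h (∫ ω, u ^ Z (n + 1) ω ∂μ) := by
    intro n
    induction n with
    | zero =>
      intro u hu
      have hz1 : ∫ ω, u ^ Z (0 + 1) ω ∂μ = fc u := hZ1int u hu
      rw [R1 0 u hu, hZI0int u hu, hz1, hZI0int (fc u) (hnormfc u hu)]
      ring
    | succ n ih =>
      intro u hu
      rw [R1 (n + 1) u hu, ih (fc u) (hnormfc u hu), ← R2 (n + 1) u hu,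
        R1 n u hu]
      ring
  -- dominated convergence
  set rr : ℕ → ℝ := fun n => (a ^ n)⁻¹ with hrr
  have hrrpos : ∀ n, 0 < rr n := fun n => inv_pos.2 (pow_pos ha0 n)
  have hDCT : ∀ (w : ℂ), 0 ≤ w.re → ∀ (V : ℕ → Ω → ℕ), (∀ n, Measurable (V n)) →
      ∀ (L : Ω → ℝ), (∀ᵐ ω ∂μ, Tendsto (fun n => (V n ω : ℝ) / a ^ n) atTop (𝓝 (L ω))) →
      Tendsto (fun n => ∫ ω, Complex.exp (-w * (rr n : ℂ)) ^ V n ω ∂μ) atTop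
        (𝓝 (∫ ω, Complex.exp (-w * (L ω : ℂ)) ∂μ)) := by
    intro w hw V hV L hL
    have hrw : ∀ n, (fun ω => Complex.exp (-w * (rr n : ℂ)) ^ V n ω)
        = fun ω => Complex.exp (-w * (((V n ω : ℝ) / a ^ n : ℝ) : ℂ)) := by
      intro n
      funext ω
      rw [← Complex.exp_nat_mul]
      congr 1
      push_cast [hrr]
      ring
    have hbd : ∀ (x : ℝ), 0 ≤ x → ‖Complex.exp (-w * (x : ℂ))‖ ≤ 1 := by
      intro x hx
      rw [Complex.norm_exp]
      apply Real.exp_le_one_iff.2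
      have : (-w * (x : ℂ)).re = -(w.re * x) := by
        simp [Complex.mul_re]
      rw [this]
      exact neg_nonpos.2 (mul_nonneg hw hx)
    simp only [hrw]
    apply tendsto_integral_of_dominated_convergence (fun _ => (1 : ℝ))
    · intro n
      exact (Measurable.comp (measurable_from_top
        (f := fun k : ℕ => Complex.exp (-w * (((k : ℝ) / a ^ n : ℝ) : ℂ)))) (hV n)).aestronglyMeasurable
    · exact integrable_const 1
    · intro n
      filter_upwards with ω
      exact hbd _ (div_nonneg (Nat.cast_nonneg _) (le_of_lt (pow_pos ha0 n)))
    · filter_upwards [hL] with ω hω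
      have h1 : Tendsto (fun n => (((V n ω : ℝ) / a ^ n : ℝ) : ℂ)) atTop (𝓝 ((L ω : ℂ))) :=
        (Complex.continuous_ofReal.tendsto _).comp hω
      have h2 : Tendsto (fun n => -w * (((V n ω : ℝ) / a ^ n : ℝ) : ℂ)) atTop
          (𝓝 (-w * (L ω : ℂ))) := h1.const_mul _
      exact h2.cexp
  -- limits
  have hzdiv : 0 ≤ (z / (a : ℂ)).re := by
    rw [Complex.div_ofReal_re]
    exact div_nonneg hz (le_of_lt ha0)
  set u' : ℕ → ℂ := fun n => Complex.exp (-z * (rr n : ℂ)) with hu'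
  have hu'norm : ∀ n, ‖u' n‖ ≤ 1 := by
    intro n
    rw [hu']
    simp only
    rw [Complex.norm_exp]
    apply Real.exp_le_one_iff.2
    have : (-z * ((rr n : ℝ) : ℂ)).re = -(z.re * rr n) := by
      simp [Complex.mul_re]
    rw [this]
    exact neg_nonpos.2 (mul_nonneg hz (le_of_lt (hrrpos n)))
  have hu'succ : ∀ n, u' (n + 1) = Complex.exp (-(z / (a : ℂ)) * (rr n : ℂ)) := by
    intro n
    rw [hu']
    simp only
    congr 1
    have h1 : rr (n + 1) = a⁻¹ * rr n := by
      rw [hrr]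
      simp only
      rw [pow_succ, mul_inv]
      ring
    rw [h1]
    have hane : (a : ℂ) ≠ 0 := by
      simpa using ne_of_gt ha0
    push_cast
    field_simp
  -- convergence statements
  have T1 : Tendsto (fun n => ∫ ω, u' n ^ ZI n ω ∂μ) atTop (𝓝 (φs z)) := by
    rw [hφs z hz]
    exact hDCT z hz ZI hZIm WI hWI
  have T2 : Tendsto (fun n => ∫ ω, u' (n + 1) ^ ZI n ω ∂μ) atTop (𝓝 (φs (z / (a : ℂ)))) := by
    rw [hφs (z / (a : ℂ)) hzdiv]
    have := hDCT (z / (a : ℂ)) hzdiv ZI hZIm WI hWI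
    apply this.congr
    intro n
    congr 1
    funext ω
    rw [hu'succ n]
  have T3 : Tendsto (fun n => ∫ ω, u' n ^ Z n ω ∂μ) atTop (𝓝 (φ z)) := by
    rw [hφ z hz]
    exact hDCT z hz Z hZm W hW
  -- shifted sequences
  have T1' : Tendsto (fun n => ∫ ω, u' (n + 1) ^ ZI (n + 1) ω ∂μ) atTop (𝓝 (φs z)) :=
    T1.comp (tendsto_add_atTop_nat 1)
  have T3' : Tendsto (fun n => ∫ ω, u' (n + 1) ^ Z (n + 1) ω ∂μ) atTop (𝓝 (φ z)) :=
    T3.comp (tendsto_add_atTop_nat 1)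
  -- the h-factor converges
  have hφznorm : ‖φ z‖ ≤ 1 := by
    rw [hφ z hz]
    apply norm_integral_le_one
    filter_upwards [hWpos] with ω hω
    rw [Complex.norm_exp]
    apply Real.exp_le_one_iff.2
    have : (-z * ((W ω : ℝ) : ℂ)).re = -(z.re * W ω) := by
      simp [Complex.mul_re]
    rw [this]
    exact neg_nonpos.2 (mul_nonneg hz (le_of_lt hω))
  set c : ℕ → ℂ := fun n => ∫ ω, u' (n + 1) ^ Z (n + 1) ω ∂μ with hc
  have hcnorm : ∀ n, ‖c n‖ ≤ 1 := fun n =>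
    norm_integral_le_one (Filter.Eventually.of_forall fun ω => hupow _ (hu'norm (n + 1)) _)
  have hch : Tendsto (fun n => h (c n)) atTop (𝓝 (h (φ z))) := by
    have hrw1 : ∀ n, h (c n) = ∫ ω, c n ^ Y 0 ω ∂μ := fun n => (hYint 0 (c n) (hcnorm n)).symm
    have hrw2 : h (φ z) = ∫ ω, φ z ^ Y 0 ω ∂μ := (hYint 0 (φ z) hφznorm).symm
    rw [hrw2]
    apply Tendsto.congr (fun n => (hrw1 n).symm)
    apply tendsto_integral_of_dominated_convergence (fun _ => (1 : ℝ))
    · intro n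
      exact (Measurable.comp (measurable_from_top (f := fun k : ℕ => c n ^ k))
        (hYmeas 0)).aestronglyMeasurable
    · exact integrable_const 1
    · intro n
      filter_upwards with ω
      exact hupow _ (hcnorm n) _
    · filter_upwards with ω
      exact T3'.pow _
  -- combine
  have hEq : ∀ n, ∫ ω, u' (n + 1) ^ ZI (n + 1) ω ∂μ
      = (∫ ω, u' (n + 1) ^ ZI n ω ∂μ) * h (c n) :=
    fun n => main n (u' (n + 1)) (hu'norm (n + 1))
  have Tprod : Tendsto (fun n => (∫ ω, u' (n + 1) ^ ZI n ω ∂μ) * h (c n)) atTop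
      (𝓝 (φs (z / (a : ℂ)) * h (φ z))) := T2.mul hch
  have hfinal : φs (z / (a : ℂ)) * h (φ z) = φs z :=
    tendsto_nhds_unique Tprod (T1'.congr (fun n => hEq n))
  rw [← hfinal]
  ring
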